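/- Let d ≥ 1, let p : [0,1] × ℝᵈ → ℝ_{>0} be a differentiable probability density path and v : [0,1] × ℝᵈ → ℝᵈ a differentiable time-dependent vector field satisfying the continuity equation ∂_t p_t(x) + div_x(p_t(x) v_t(x)) = 0 for all t and x, and let φ solve (d/dt) φ_t(x) = v_t(φ_t(x)) with φ₀(x) = x. Assume t ↦ div_x v_t(φ_t(x)) is integrable on [0,1]. Then for every x ∈ ℝᵈ, log p₁(φ₁(x)) − log p₀(x) = −∫₀¹ div_x v_t(φ_t(x)) dt. -/

import Mathlib

open Set

noncomputable section

/-- The (spatial) divergence of a vector field on `ℝᵈ`: `div v x = ∑ i ∂vⁱ/∂xⁱ (x)`. -/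
def divergence {d : ℕ} (v : EuclideanSpace ℝ (Fin d) → EuclideanSpace ℝ (Fin d))
    (x : EuclideanSpace ℝ (Fin d)) : ℝ :=
  ∑ i, fderiv ℝ v x (EuclideanSpace.single i 1) i

lemma basis_expand {d : ℕ} (u : EuclideanSpace ℝ (Fin d)) :
    u = ∑ i, u i • EuclideanSpace.single i 1 := by
  ext j
  rw [WithLp.ofLp_sum, Finset.sum_apply]
  simp [EuclideanSpace.single_apply, mul_comm]

lemma clm_apply_eq_sum {d : ℕ} (L : EuclideanSpace ℝ (Fin d) →L[ℝ] ℝ)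
    (u : EuclideanSpace ℝ (Fin d)) :
    L u = ∑ i, L (EuclideanSpace.single i 1) * u i := by
  conv_lhs => rw [basis_expand u]
  rw [map_sum]
  simp [mul_comm]

lemma divergence_smul {d : ℕ} (f : EuclideanSpace ℝ (Fin d) → ℝ)
    (w : EuclideanSpace ℝ (Fin d) → EuclideanSpace ℝ (Fin d))
    (x : EuclideanSpace ℝ (Fin d))
    (hf : DifferentiableAt ℝ f x) (hw : DifferentiableAt ℝ w x) :
    divergence (fun y => f y • w y) x = fderiv ℝ f x (w x) + f x * divergence w x := by
  unfold divergence
  rw [fderiv_fun_smul hf hw]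
  simp only [ContinuousLinearMap.add_apply, ContinuousLinearMap.smul_apply,
    ContinuousLinearMap.smulRight_apply, PiLp.add_apply, PiLp.smul_apply, smul_eq_mul]
  rw [Finset.sum_add_distrib, Finset.mul_sum, clm_apply_eq_sum (fderiv ℝ f x) (w x)]
  ring

/-- **Integrated change of variables along the flow:** if `(p, v)` satisfies the
continuity equation and `φ` is the flow of `v` with `φ₀ = id`, and `t ↦ div v_t(φ_t(x))`
is integrable on `[0,1]`, then
`log p₁(φ₁(x)) − log p₀(x) = −∫₀¹ div v_t(φ_t(x)) dt`. -/
theorem log_density_along_flow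
    {d : ℕ} (hd : 1 ≤ d)
    (p : ℝ → EuclideanSpace ℝ (Fin d) → ℝ)
    (v : ℝ → EuclideanSpace ℝ (Fin d) → EuclideanSpace ℝ (Fin d))
    (φ : ℝ → EuclideanSpace ℝ (Fin d) → EuclideanSpace ℝ (Fin d))
    -- `p` is a differentiable, everywhere-positive probability density path
    (hp_pos : ∀ t ∈ Icc (0:ℝ) 1, ∀ x, 0 < p t x)
    (hp_int : ∀ t ∈ Icc (0:ℝ) 1, ∫ x, p t x = 1)
    (hp_diff : Differentiable ℝ (Function.uncurry p))
    -- `v` is a differentiable time-dependent vector field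
    (hv_diff : Differentiable ℝ (Function.uncurry v))
    -- the continuity equation
    (hcont : ∀ t ∈ Icc (0:ℝ) 1, ∀ x,
      deriv (fun s => p s x) t + divergence (fun y => p t y • v t y) x = 0)
    -- `φ` is the flow of `v` starting at the identity
    (hφ0 : ∀ x, φ 0 x = x)
    (hφ : ∀ t ∈ Icc (0:ℝ) 1, ∀ x, HasDerivAt (fun s => φ s x) (v t (φ t x)) t)
    -- integrability of the divergence along the flow
    (hInt : ∀ x, IntervalIntegrable
      (fun t => divergence (v t) (φ t x)) MeasureTheory.volume 0 1) :
    ∀ x, Real.log (p 1 (φ 1 x)) - Real.log (p 0 x)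
      = -∫ t in (0:ℝ)..1, divergence (v t) (φ t x) := by
  intro x
  have key : ∀ t ∈ uIcc (0:ℝ) 1,
      HasDerivAt (fun s => Real.log (p s (φ s x)))
        (-(divergence (v t) (φ t x))) t := by
    intro t ht
    rw [uIcc_of_le zero_le_one] at ht
    set y := φ t x with hy
    set D := fderiv ℝ (Function.uncurry p) (t, y) with hD
    -- partial derivative in space
    have h_right : HasFDerivAt (p t)
        (D.comp (ContinuousLinearMap.inr ℝ ℝ (EuclideanSpace ℝ (Fin d)))) y :=
      (hp_diff (t, y)).hasFDerivAt.comp y (hasFDerivAt_prodMk_right t y)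
    have hv_right : DifferentiableAt ℝ (v t) y :=
      ((hv_diff (t, y)).hasFDerivAt.comp y (hasFDerivAt_prodMk_right t y)).differentiableAt
    -- partial derivative in time
    have h_time : HasDerivAt (fun s => p s y) (D (1, 0)) t := by
      have := (hp_diff (t, y)).hasFDerivAt.comp_hasDerivAt t
        ((hasDerivAt_id t).prodMk (hasDerivAt_const t y))
      exact this
    -- chain rule along the flow
    have hg : HasDerivAt (fun s => p s (φ s x)) (D (1, v t y)) t := by
      have := (hp_diff (t, y)).hasFDerivAt.comp_hasDerivAt t
        ((hasDerivAt_id t).prodMk (hφ t ht x))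
      exact this
    have hsplit : D (1, v t y) = D (1, 0) + D (0, v t y) := by
      rw [← map_add]
      norm_num
    have hDx : D (0, v t y) = fderiv ℝ (p t) y (v t y) := by
      rw [h_right.fderiv]
      rfl
    have hcont' := hcont t ht y
    rw [divergence_smul (p t) (v t) y h_right.differentiableAt hv_right,
      h_time.deriv] at hcont'
    have hval : D (1, v t y) = -(p t y * divergence (v t) y) := by
      rw [hsplit, hDx]
      linarith
    have hpy : p t y ≠ 0 := ne_of_gt (hp_pos t ht y)
    have hlog := hg.log hpy
    have : D (1, v t y) / p t y = -(divergence (v t) y) := by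
      rw [hval]
      field_simp
    rwa [this] at hlog
  have hInt' : IntervalIntegrable (fun t => -(divergence (v t) (φ t x)))
      MeasureTheory.volume 0 1 := (hInt x).neg
  have := intervalIntegral.integral_eq_sub_of_hasDerivAt key hInt'
  rw [intervalIntegral.integral_neg, hφ0 x] at this
  exact this.symm

end
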